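/- For non-zero subspaces U and W of R^n, the maximum angle of W^⊥ with respect to U^⊥ equals the maximum angle of U with respect to W: ∠_M(W^⊥, U^⊥) = ∠_M(U, W). -/

import Mathlib

/-! In `ℝⁿ` with the standard inner product,
`∠_M(U,W) = max_{u ∈ U, u≠0} min_{w ∈ W, w≠0} ∠(u,w)` where
`∠(u,w) = arccos(⟪u,w⟫/(‖u‖‖w‖))`, and `Uᗮ` denotes the orthogonal complement. -/

/-- The angle `∠(u,V)` of a vector with a subspace. -/
noncomputable def angleToSub {n : ℕ} (u : EuclideanSpace ℝ (Fin n))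
    (V : Submodule ℝ (EuclideanSpace ℝ (Fin n))) : ℝ :=
  sInf {θ : ℝ | ∃ v ∈ V, v ≠ 0 ∧ θ = InnerProductGeometry.angle u v}

/-- The maximum angle `∠_M(U,V)`. -/
noncomputable def maxAngle {n : ℕ}
    (U V : Submodule ℝ (EuclideanSpace ℝ (Fin n))) : ℝ :=
  sSup {θ : ℝ | ∃ u ∈ U, u ≠ 0 ∧ θ = angleToSub u V}

section Aux

open Real InnerProductGeometry RealInnerProductSpace

variable {n : ℕ}

private lemma arccos_anti {x y : ℝ} (h : x ≤ y) : Real.arccos y ≤ Real.arccos x := by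
  simp only [Real.arccos]
  have := Real.monotone_arcsin h
  linarith

private lemma inner_proj (V : Submodule ℝ (EuclideanSpace ℝ (Fin n)))
    (u v : EuclideanSpace ℝ (Fin n)) (hv : v ∈ V) :
    ⟪u, v⟫ = ⟪(Submodule.orthogonalProjection V u : EuclideanSpace ℝ (Fin n)), v⟫ := by
  have h := Submodule.starProjection_inner_eq_zero u v hv
  rw [inner_sub_left, sub_eq_zero] at h
  exact h

/-- The angle to a subspace is the arccos of the normalized projection length. -/
private lemma angleToSub_eq (u : EuclideanSpace ℝ (Fin n))
    (V : Submodule ℝ (EuclideanSpace ℝ (Fin n))) (hu : u ≠ 0) (hV : V ≠ ⊥) :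
    angleToSub u V
      = Real.arccos (‖(Submodule.orthogonalProjection V u : EuclideanSpace ℝ (Fin n))‖ / ‖u‖) := by
  set p : EuclideanSpace ℝ (Fin n) := (Submodule.orthogonalProjection V u : EuclideanSpace ℝ (Fin n))
    with hp
  have hu' : (0:ℝ) < ‖u‖ := norm_pos_iff.mpr hu
  apply IsLeast.csInf_eq
  constructor
  · -- membership
    by_cases h0 : p = 0
    · obtain ⟨v, hvV, hv0⟩ := Submodule.exists_mem_ne_zero_of_ne_bot hV
      refine ⟨v, hvV, hv0, ?_⟩
      have hinner : ⟪u, v⟫ = 0 := by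
        rw [inner_proj V u v hvV, ← hp, h0, inner_zero_left]
      rw [InnerProductGeometry.angle, hinner, h0]
      simp
    · refine ⟨p, (Submodule.orthogonalProjection V u).2, h0, ?_⟩
      have hp' : (0:ℝ) < ‖p‖ := norm_pos_iff.mpr h0
      have hinner : ⟪u, p⟫ = ‖p‖ ^ 2 := by
        rw [inner_proj V u p (Submodule.orthogonalProjection V u).2, ← hp,
          real_inner_self_eq_norm_sq]
      rw [InnerProductGeometry.angle, hinner]
      congr 1
      field_simp
  · -- lower bound
    rintro θ ⟨v, hvV, hv0, rfl⟩
    have hv' : (0:ℝ) < ‖v‖ := norm_pos_iff.mpr hv0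
    rw [InnerProductGeometry.angle]
    apply arccos_anti
    rw [inner_proj V u v hvV, ← hp]
    have hCS : ⟪p, v⟫ ≤ ‖p‖ * ‖v‖ := real_inner_le_norm p v
    rw [div_le_div_iff₀ (by positivity) hu']
    calc ⟪p, v⟫ * ‖u‖ ≤ ‖p‖ * ‖v‖ * ‖u‖ := by nlinarith
    _ = ‖p‖ * (‖u‖ * ‖v‖) := by ring

private lemma bddAbove_maxAngleSet (U V : Submodule ℝ (EuclideanSpace ℝ (Fin n)))
    (hV : V ≠ ⊥) :
    BddAbove {θ : ℝ | ∃ u ∈ U, u ≠ 0 ∧ θ = angleToSub u V} := by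
  refine ⟨Real.pi, ?_⟩
  rintro θ ⟨u, huU, hu0, rfl⟩
  rw [angleToSub_eq u V hu0 hV]
  exact Real.arccos_le_pi _

private lemma nonneg_of_mem_maxAngleSet {U V : Submodule ℝ (EuclideanSpace ℝ (Fin n))}
    (hV : V ≠ ⊥) {θ : ℝ} (hθ : θ ∈ {θ : ℝ | ∃ u ∈ U, u ≠ 0 ∧ θ = angleToSub u V}) :
    0 ≤ θ := by
  obtain ⟨u, huU, hu0, rfl⟩ := hθ
  rw [angleToSub_eq u V hu0 hV]
  exact Real.arccos_nonneg _

/-- The key inequality: `∠_M(Wᗮ, Uᗮ) ≤ ∠_M(U, W)`. -/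
private lemma maxAngle_le (U W : Submodule ℝ (EuclideanSpace ℝ (Fin n)))
    (hU : U ≠ ⊥) (hW : W ≠ ⊥) (hU' : U ≠ ⊤) (hW' : W ≠ ⊤) :
    maxAngle Wᗮ Uᗮ ≤ maxAngle U W := by
  have hUo : Uᗮ ≠ (⊥ : Submodule ℝ (EuclideanSpace ℝ (Fin n))) := by
    simpa [Submodule.orthogonal_eq_bot_iff] using hU'
  have hWo : Wᗮ ≠ (⊥ : Submodule ℝ (EuclideanSpace ℝ (Fin n))) := by
    simpa [Submodule.orthogonal_eq_bot_iff] using hW'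
  obtain ⟨w₀, hw₀W, hw₀0⟩ := Submodule.exists_mem_ne_zero_of_ne_bot hWo
  have hne : {θ : ℝ | ∃ w ∈ Wᗮ, w ≠ 0 ∧ θ = angleToSub w Uᗮ}.Nonempty :=
    ⟨angleToSub w₀ Uᗮ, w₀, hw₀W, hw₀0, rfl⟩
  apply csSup_le hne
  rintro θ ⟨w', hw'W, hw'0, rfl⟩
  have hw'' : (0:ℝ) < ‖w'‖ := norm_pos_iff.mpr hw'0
  rw [angleToSub_eq w' Uᗮ hw'0 hUo]
  set q : EuclideanSpace ℝ (Fin n) := (Submodule.orthogonalProjection Uᗮ w' : EuclideanSpace ℝ (Fin n))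
    with hq
  set p : EuclideanSpace ℝ (Fin n) := (Submodule.orthogonalProjection U w' : EuclideanSpace ℝ (Fin n))
    with hp
  have hpyth : ‖w'‖ ^ 2 = ‖p‖ ^ 2 + ‖q‖ ^ 2 := by
    simpa only [Submodule.coe_norm] using Submodule.norm_sq_eq_add_norm_sq_projection w' U
  by_cases hp0 : p = 0
  · -- then the angle is `arccos 1 = 0`, which is at most the sup
    have hq' : q = w' := by
      rw [hq, ← Submodule.starProjection_apply, Submodule.starProjection_orthogonal_val,
        Submodule.starProjection_apply, ← hp, hp0, sub_zero]
    rw [hq', div_self (ne_of_gt hw''), Real.arccos_one]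
    obtain ⟨u₀, hu₀U, hu₀0⟩ := Submodule.exists_mem_ne_zero_of_ne_bot hU
    have hmem : angleToSub u₀ W ∈ {θ : ℝ | ∃ u ∈ U, u ≠ 0 ∧ θ = angleToSub u W} :=
      ⟨u₀, hu₀U, hu₀0, rfl⟩
    exact le_trans (nonneg_of_mem_maxAngleSet hW hmem)
      (le_csSup (bddAbove_maxAngleSet U W hW) hmem)
  · -- the interesting case: use `u = P_U w'` as witness
    have hpU : p ∈ U := (Submodule.orthogonalProjection U w').2
    have hp' : (0:ℝ) < ‖p‖ := norm_pos_iff.mpr hp0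
    have hmem : angleToSub p W ∈ {θ : ℝ | ∃ u ∈ U, u ≠ 0 ∧ θ = angleToSub u W} :=
      ⟨p, hpU, hp0, rfl⟩
    refine le_trans ?_ (le_csSup (bddAbove_maxAngleSet U W hW) hmem)
    rw [angleToSub_eq p W hp0 hW]
    set r : EuclideanSpace ℝ (Fin n) := (Submodule.orthogonalProjection W p : EuclideanSpace ℝ (Fin n))
      with hr
    set s : EuclideanSpace ℝ (Fin n) := (Submodule.orthogonalProjection Wᗮ p : EuclideanSpace ℝ (Fin n))
      with hs
    have hpyth2 : ‖p‖ ^ 2 = ‖r‖ ^ 2 + ‖s‖ ^ 2 := by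
      simpa only [Submodule.coe_norm] using Submodule.norm_sq_eq_add_norm_sq_projection p W
    -- ⟪p, w'⟫ = ‖p‖²
    have hinner1 : ⟪p, w'⟫ = ‖p‖ ^ 2 := by
      have := inner_proj U w' p hpU
      rw [← hp, real_inner_self_eq_norm_sq] at this
      rw [real_inner_comm, this]
    -- ⟪p, w'⟫ = ⟪s, w'⟫ ≤ ‖s‖ ‖w'‖
    have hinner2 : ‖p‖ ^ 2 ≤ ‖s‖ * ‖w'‖ := by
      have h1 := inner_proj Wᗮ p w' hw'W
      rw [← hs] at h1
      have h2 : ⟪s, w'⟫ ≤ ‖s‖ * ‖w'‖ := real_inner_le_norm s w'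
      rw [← hinner1, h1] at *
      linarith
    apply arccos_anti
    rw [div_le_div_iff₀ hp' hw'']
    -- need: ‖r‖ * ‖w'‖ ≤ ‖q‖ * ‖p‖
    have key : (‖r‖ * ‖w'‖) ^ 2 ≤ (‖q‖ * ‖p‖) ^ 2 := by
      have hprod : (0:ℝ) ≤ (‖s‖ * ‖w'‖ - ‖p‖ ^ 2) * (‖s‖ * ‖w'‖ + ‖p‖ ^ 2) :=
        mul_nonneg (by linarith) (by positivity)
      nlinarith [hpyth, hpyth2]
    have h1 := Real.sqrt_le_sqrt key
    rwa [Real.sqrt_sq (by positivity), Real.sqrt_sq (by positivity)] at h1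

end Aux

/-- For non-zero subspaces `U` and `W` of `ℝⁿ` (so that all four angles
are between genuinely non-zero subspaces, we also require the orthogonal complements
to be non-zero, i.e. `U, W ≠ ℝⁿ`), the maximum angle of `W^⊥` with respect to `U^⊥`
equals the maximum angle of `U` with respect to `W`: `∠_M(W^⊥, U^⊥) = ∠_M(U, W)`. -/
theorem maxAngle_orthogonal {n : ℕ}
    (U W : Submodule ℝ (EuclideanSpace ℝ (Fin n)))
    (hU : U ≠ ⊥) (hW : W ≠ ⊥) (hU' : U ≠ ⊤) (hW' : W ≠ ⊤) :
    maxAngle Wᗮ Uᗮ = maxAngle U W := by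
  have hUo : Uᗮ ≠ (⊥ : Submodule ℝ (EuclideanSpace ℝ (Fin n))) := by
    simpa [Submodule.orthogonal_eq_bot_iff] using hU'
  have hWo : Wᗮ ≠ (⊥ : Submodule ℝ (EuclideanSpace ℝ (Fin n))) := by
    simpa [Submodule.orthogonal_eq_bot_iff] using hW'
  have hUt : Uᗮ ≠ (⊤ : Submodule ℝ (EuclideanSpace ℝ (Fin n))) := by
    simpa [Submodule.orthogonal_eq_top_iff] using hU
  have hWt : Wᗮ ≠ (⊤ : Submodule ℝ (EuclideanSpace ℝ (Fin n))) := by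
    simpa [Submodule.orthogonal_eq_top_iff] using hW
  refine le_antisymm (maxAngle_le U W hU hW hU' hW') ?_
  have h := maxAngle_le Wᗮ Uᗮ hWo hUo hWt hUt
  rwa [Submodule.orthogonal_orthogonal, Submodule.orthogonal_orthogonal] at h
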